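/- arXiv:math/0503448 — 6 statements merged into one kernel-verified Lean document; each statement's English description precedes it below -/
import Mathlib

section
/- Let S be a semiring, A ∈ S^{n×n}, B ∈ S^{n×q}, and let K ⊆ S^n be a subsemimodule. Define X₁ = K and X_{r+1} = φ(X_r) for r ≥ 1. Then the sequence (X_r) is decreasing, i.e. X_{r+1} ⊆ X_r for all r ≥ 1. Moreover, setting X_ω = ⋂_{r≥1} X_r, every geometrically (A,B)-invariant subsemimodule of S^n contained in K is contained in X_ω; in particular K* ⊆ X_ω. -/
/-- A subsemimodule `X ⊆ Sⁿ` is geometrically `(A,B)`-invariant if for every `x ∈ X`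
there exists a control `u ∈ S^q` with `Ax + Bu ∈ X`. -/
def GeomInv {S : Type*} [Semiring S] {n q : ℕ} (A : Matrix (Fin n) (Fin n) S)
    (B : Matrix (Fin n) (Fin q) S) (X : Set (Fin n → S)) : Prop :=
  ∀ x ∈ X, ∃ u : Fin q → S, A.mulVec x + B.mulVec u ∈ X

/-- `Kstar A B K`: initial states steerable so as to remain in `K` forever. -/
def Kstar {S : Type*} [Semiring S] {n q : ℕ} (A : Matrix (Fin n) (Fin n) S)
    (B : Matrix (Fin n) (Fin q) S) (K : Set (Fin n → S)) : Set (Fin n → S) :=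
  {x₀ | ∃ (u : ℕ → Fin q → S) (x : ℕ → Fin n → S),
    x 0 = x₀ ∧ (∀ k : ℕ, x (k + 1) = A.mulVec (x k) + B.mulVec (u (k + 1))) ∧
    ∀ k : ℕ, x k ∈ K}

/-- `Im B`: the subsemimodule of `Sⁿ` generated by the columns of `B`. -/
def ImB {S : Type*} [Semiring S] {n q : ℕ} (B : Matrix (Fin n) (Fin q) S) :
    Set (Fin n → S) :=
  {v | ∃ u : Fin q → S, v = B.mulVec u}

/-- `Z ⊖ Y = {u : ∃ y ∈ Y, u + y ∈ Z}`. -/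
def Ominus {S : Type*} [Semiring S] {n : ℕ} (Z Y : Set (Fin n → S)) : Set (Fin n → S) :=
  {u | ∃ y ∈ Y, u + y ∈ Z}

/-- `A⁻¹(Y) = {u : Au ∈ Y}`. -/
def PreA {S : Type*} [Semiring S] {n : ℕ} (A : Matrix (Fin n) (Fin n) S)
    (Y : Set (Fin n → S)) : Set (Fin n → S) :=
  {u | A.mulVec u ∈ Y}

/-- `φ(X) = X ∩ A⁻¹(X ⊖ Im B)`. -/
def Phi {S : Type*} [Semiring S] {n q : ℕ} (A : Matrix (Fin n) (Fin n) S)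
    (B : Matrix (Fin n) (Fin q) S) (X : Set (Fin n → S)) : Set (Fin n → S) :=
  X ∩ PreA A (Ominus X (ImB B))

/-- The sequence `X₁ = K`, `X_{r+1} = φ(X_r)`; here `Xseq A B K r` is `X_{r+1}`,
so that `Xseq A B K 0 = X₁ = K`. -/
def Xseq {S : Type*} [Semiring S] {n q : ℕ} (A : Matrix (Fin n) (Fin n) S)
    (B : Matrix (Fin n) (Fin q) S) (K : Set (Fin n → S)) : ℕ → Set (Fin n → S)
  | 0 => K
  | r + 1 => Phi A B (Xseq A B K r)

/-- The sequence `(X_r)` is decreasing; every geometrically `(A,B)`-invariant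
subsemimodule of `Sⁿ` contained in `K` is contained in `X_ω = ⋂_r X_r`; in particular
`K* ⊆ X_ω`. -/
theorem xseq_decreasing_and_xomega_upper_bound {S : Type*} [Semiring S] {n q : ℕ}
    (A : Matrix (Fin n) (Fin n) S) (B : Matrix (Fin n) (Fin q) S)
    (K : Submodule S (Fin n → S)) :
    (∀ r : ℕ, Xseq A B (K : Set (Fin n → S)) (r + 1) ⊆ Xseq A B (K : Set (Fin n → S)) r) ∧
    (∀ X : Submodule S (Fin n → S),
      GeomInv A B (X : Set (Fin n → S)) → (X : Set (Fin n → S)) ⊆ (K : Set (Fin n → S)) →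
      (X : Set (Fin n → S)) ⊆ ⋂ r : ℕ, Xseq A B (K : Set (Fin n → S)) r) ∧
    Kstar A B (K : Set (Fin n → S)) ⊆ ⋂ r : ℕ, Xseq A B (K : Set (Fin n → S)) r := by
  refine ⟨fun r => Set.inter_subset_left, ?_, ?_⟩
  · intro X hinv hXK
    have h : ∀ r : ℕ, (X : Set (Fin n → S)) ⊆ Xseq A B (K : Set (Fin n → S)) r := by
      intro r
      induction r with
      | zero => exact hXK
      | succ r ih =>
        intro x hx
        obtain ⟨u, hu⟩ := hinv x hx
        exact ⟨ih hx, Matrix.mulVec B u, ⟨u, rfl⟩, ih hu⟩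
    exact fun x hx => Set.mem_iInter.2 fun r => h r hx
  · intro x₀ ⟨u, x, hx0, hrec, hK⟩
    have h : ∀ r k : ℕ, x k ∈ Xseq A B (K : Set (Fin n → S)) r := by
      intro r
      induction r with
      | zero => exact hK
      | succ r ih =>
        intro k
        refine ⟨ih k, Matrix.mulVec B (u (k + 1)), ⟨u (k + 1), rfl⟩, ?_⟩
        rw [← hrec k]; exact ih (k + 1)
    exact Set.mem_iInter.2 fun r => hx0 ▸ h r 0
end

section
/- Let S be a semiring, A ∈ S^{n×n}, B ∈ S^{n×q}, and let K ⊆ S^n be a subsemimodule. Define X₁ = K and X_{r+1} = φ(X_r). If there exists k ≥ 1 such that X_{k+1} = X_k, then K* = X_k; in particular X_k is then the maximal geometrically (A,B)-invariant semimodule contained in K. -/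
lemma mem_Phi {S : Type*} [Semiring S] {n q : ℕ} (A : Matrix (Fin n) (Fin n) S)
    (B : Matrix (Fin n) (Fin q) S) (X : Set (Fin n → S)) (x : Fin n → S) :
    x ∈ Phi A B X ↔ x ∈ X ∧ ∃ u, A.mulVec x + B.mulVec u ∈ X := by
  constructor
  · rintro ⟨hx, v, ⟨u, rfl⟩, hv⟩; exact ⟨hx, u, hv⟩
  · rintro ⟨hx, u, hu⟩; exact ⟨hx, B.mulVec u, ⟨u, rfl⟩, hu⟩

lemma xseq_subset {S : Type*} [Semiring S] {n q : ℕ} (A : Matrix (Fin n) (Fin n) S)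
    (B : Matrix (Fin n) (Fin q) S) (K : Set (Fin n → S)) :
    ∀ r, Xseq A B K r ⊆ K
  | 0 => subset_rfl
  | r + 1 => (Set.inter_subset_left).trans (xseq_subset A B K r)

lemma kstar_subset_xseq {S : Type*} [Semiring S] {n q : ℕ} (A : Matrix (Fin n) (Fin n) S)
    (B : Matrix (Fin n) (Fin q) S) (K : Set (Fin n → S)) :
    ∀ r, Kstar A B K ⊆ Xseq A B K r := by
  intro r
  induction r with
  | zero =>
    rintro x₀ ⟨u, x, hx0, _, hK⟩
    exact hx0 ▸ hK 0
  | succ r ih =>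
    rintro x₀ hx₀
    obtain ⟨u, x, hx0, hrec, hK⟩ := hx₀
    have h1 : x 1 ∈ Kstar A B K := by
      refine ⟨fun m => u (m + 1), fun m => x (m + 1), rfl, fun m => ?_, fun m => hK (m + 1)⟩
      exact hrec (m + 1)
    rw [show Xseq A B K (r+1) = Phi A B (Xseq A B K r) from rfl, mem_Phi]
    refine ⟨ih ⟨u, x, hx0, hrec, hK⟩, u 1, ?_⟩
    have := ih h1
    rwa [hrec 0, hx0] at this

lemma subset_xseq_of_geominv {S : Type*} [Semiring S] {n q : ℕ} (A : Matrix (Fin n) (Fin n) S)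
    (B : Matrix (Fin n) (Fin q) S) (K : Set (Fin n → S)) (X : Set (Fin n → S))
    (hX : GeomInv A B X) (hXK : X ⊆ K) : ∀ r, X ⊆ Xseq A B K r := by
  intro r
  induction r with
  | zero => exact hXK
  | succ r ih =>
    intro x hx
    rw [show Xseq A B K (r+1) = Phi A B (Xseq A B K r) from rfl, mem_Phi]
    obtain ⟨u, hu⟩ := hX x hx
    exact ⟨ih hx, u, ih hu⟩

/-- If the sequence `X₁ = K`, `X_{r+1} = φ(X_r)` stabilizes, i.e. `X_{k+1} = X_k` for
some `k ≥ 1` (here `Xseq A B K k` plays the role of `X_{k+1}`), then `K* = X_k`; in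
particular `X_k` is then the maximal geometrically `(A,B)`-invariant semimodule
contained in `K`. -/
theorem kstar_eq_of_stabilizes {S : Type*} [Semiring S] {n q : ℕ}
    (A : Matrix (Fin n) (Fin n) S) (B : Matrix (Fin n) (Fin q) S)
    (K : Submodule S (Fin n → S)) (k : ℕ)
    (h : Xseq A B (K : Set (Fin n → S)) (k + 1) = Xseq A B (K : Set (Fin n → S)) k) :
    Kstar A B (K : Set (Fin n → S)) = Xseq A B (K : Set (Fin n → S)) k ∧
    Xseq A B (K : Set (Fin n → S)) k ⊆ (K : Set (Fin n → S)) ∧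
    GeomInv A B (Xseq A B (K : Set (Fin n → S)) k) ∧
    ∀ X : Submodule S (Fin n → S),
      GeomInv A B (X : Set (Fin n → S)) → (X : Set (Fin n → S)) ⊆ (K : Set (Fin n → S)) →
      (X : Set (Fin n → S)) ⊆ Xseq A B (K : Set (Fin n → S)) k := by
  set Xk := Xseq A B (K : Set (Fin n → S)) k with hXk
  have hinv : GeomInv A B Xk := by
    intro x hx
    have hx' : x ∈ Xseq A B (K : Set (Fin n → S)) (k + 1) := h ▸ hx
    rw [show Xseq A B (K : Set (Fin n → S)) (k+1) = Phi A B Xk from rfl, mem_Phi] at hx'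
    exact hx'.2
  have hsubK : Xk ⊆ (K : Set (Fin n → S)) := xseq_subset A B _ k
  have hKs2 : Xk ⊆ Kstar A B (K : Set (Fin n → S)) := by
    intro x₀ hx₀
    choose! f hf using hinv
    let F : {x : Fin n → S // x ∈ Xk} → {x : Fin n → S // x ∈ Xk} × (Fin q → S) :=
      fun p => ⟨⟨_, hf p.1 p.2⟩, f p.1⟩
    let seq : ℕ → {x : Fin n → S // x ∈ Xk} × (Fin q → S) :=
      fun m => Nat.rec (⟨⟨x₀, hx₀⟩, 0⟩) (fun _ p => F p.1) m
    refine ⟨fun m => (seq m).2, fun m => (seq m).1.1, rfl, fun m => rfl,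
      fun m => hsubK (seq m).1.2⟩
  constructor
  · exact Set.Subset.antisymm (kstar_subset_xseq A B _ k) hKs2
  refine ⟨hsubK, hinv, ?_⟩
  intro X hX hXK
  exact subset_xseq_of_geominv A B _ _ hX hXK k
end

section
/- Every finitely generated subsemimodule of ℕ_min^n is compact: if Q ∈ ℕ_min^{n×p} is a matrix and X = Im Q is the set of all tropical linear combinations of the columns of Q, then X is a compact subset of ℕ_min^n for the product of the metric topologies. -/
/-- `exp(−x)` on `ℕ_min = ℕ ∪ {+∞}`, with `exp(−(+∞)) = 0`. -/
noncomputable def expNeg : WithTop ℕ → ℝ :=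
  fun x => WithTop.recTopCoe 0 (fun m : ℕ => Real.exp (-(m : ℝ))) x

/-- The topology on `ℕ_min` of the metric `d(x,y) = |exp(−x) − exp(−y)|`; it is the
topology induced by the isometric embedding `expNeg : ℕ_min → ℝ`. -/
noncomputable def nminTop : TopologicalSpace (WithTop ℕ) :=
  TopologicalSpace.induced expNeg inferInstance

/-- The product of the metric topologies on `ℕ_min^n`. -/
noncomputable def nminPiTop (n : ℕ) : TopologicalSpace (Fin n → WithTop ℕ) :=
  @Pi.topologicalSpace (Fin n) (fun _ => WithTop ℕ) (fun _ => nminTop)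

/-- The tropical matrix–vector product over `ℕ_min`: `(Qy)_i = min_j (Q_{ij} + y_j)`. -/
def minMulVec {n p : ℕ} (Q : Matrix (Fin n) (Fin p) (WithTop ℕ))
    (y : Fin p → WithTop ℕ) : Fin n → WithTop ℕ :=
  fun i => Finset.univ.inf fun j => Q i j + y j

lemma expNeg_top : expNeg ⊤ = 0 := rfl
lemma expNeg_coe (m : ℕ) : expNeg (WithTop.some m) = Real.exp (-(m : ℝ)) := rfl

lemma expNeg_nonneg (a : WithTop ℕ) : 0 ≤ expNeg a := by
  induction a using WithTop.recTopCoe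
  · simp [expNeg_top]
  · exact (Real.exp_pos _).le

lemma expNeg_add (a b : WithTop ℕ) : expNeg (a + b) = expNeg a * expNeg b := by
  induction a using WithTop.recTopCoe with
  | top => simp [expNeg_top]
  | coe m =>
    induction b using WithTop.recTopCoe with
    | top => simp [expNeg_top]
    | coe k =>
      rw [← WithTop.coe_add, expNeg_coe, expNeg_coe, expNeg_coe, ← Real.exp_add]
      push_cast
      ring_nf

lemma expNeg_antitone : Antitone expNeg := by
  intro a b hab
  induction b using WithTop.recTopCoe with
  | top => simp [expNeg_top, expNeg_nonneg]
  | coe k =>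
    induction a using WithTop.recTopCoe with
    | top => exact absurd hab (by simp)
    | coe m =>
      rw [expNeg_coe, expNeg_coe]
      exact Real.exp_le_exp.2 (by simpa using (WithTop.coe_le_coe.1 hab : m ≤ k))

lemma expNeg_min (a b : WithTop ℕ) : expNeg (min a b) = max (expNeg a) (expNeg b) :=
  expNeg_antitone.map_min

lemma continuous_expNeg : @Continuous _ _ nminTop _ expNeg := by
  letI := nminTop
  exact continuous_induced_dom

/-- Every finitely generated subsemimodule of `ℕ_min^n` is compact: for any matrix
`Q ∈ ℕ_min^{n×p}`, the set `Im Q` of all tropical linear combinations of the columns of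
`Q` is compact in `ℕ_min^n` for the product of the metric topologies. -/
theorem imQ_isCompact {n p : ℕ} (Q : Matrix (Fin n) (Fin p) (WithTop ℕ)) :
    @IsCompact (Fin n → WithTop ℕ) (nminPiTop n)
      {x : Fin n → WithTop ℕ | ∃ y : Fin p → WithTop ℕ, x = minMulVec Q y} := by
  letI : TopologicalSpace (WithTop ℕ) := nminTop
  haveI : CompactSpace (WithTop ℕ) := by
    constructor
    have hind : Topology.IsInducing expNeg := ⟨rfl⟩
    rw [hind.isCompact_iff, Set.image_univ]
    have hrange : Set.range expNeg =
        insert 0 (Set.range fun m : ℕ => Real.exp (-(m : ℝ))) := by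
      ext x
      constructor
      · rintro ⟨a, rfl⟩
        induction a using WithTop.recTopCoe
        · exact Or.inl rfl
        · exact Or.inr ⟨_, rfl⟩
      · rintro (rfl | ⟨m, rfl⟩)
        · exact ⟨⊤, rfl⟩
        · exact ⟨WithTop.some m, rfl⟩
    rw [hrange]
    refine Filter.Tendsto.isCompact_insert_range ?_
    simpa using tendsto_natCast_atTop_atTop (R := ℝ)
  have hset : {x : Fin n → WithTop ℕ | ∃ y : Fin p → WithTop ℕ, x = minMulVec Q y}
      = Set.range (minMulVec Q) := by
    ext x
    exact ⟨fun ⟨y, h⟩ => ⟨y, h.symm⟩, fun ⟨y, h⟩ => ⟨y, h.symm⟩⟩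
  have hcont : Continuous (minMulVec Q) := by
    apply continuous_pi
    intro i
    apply continuous_induced_rng.2
    have key : ∀ s : Finset (Fin p),
        Continuous fun y : Fin p → WithTop ℕ => expNeg (s.inf fun j => Q i j + y j) := by
      intro s
      induction s using Finset.induction with
      | empty => simpa using continuous_const
      | insert a s hx ih =>
        have : (fun y : Fin p → WithTop ℕ =>
            expNeg ((insert a s).inf fun j => Q i j + y j)) =
            fun y => max (expNeg (Q i a) * expNeg (y a))
              (expNeg (s.inf fun j => Q i j + y j)) := by
          funext y
          rw [Finset.inf_insert, expNeg_min, expNeg_add]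
        rw [this]
        exact ((continuous_const.mul (continuous_expNeg.comp (continuous_apply a))).max ih)
    exact key Finset.univ
  rw [hset]
  exact isCompact_range hcont
end

section
/- Let A ∈ ℤ_max^{r×n} and let Y ⊆ ℤ_max^n be a subsemimodule. Then vol(A·Y) ≤ vol(Y), where A·Y = {Ay : y ∈ Y}. In particular, for any matrix B ∈ ℤ_max^{n×p}, vol(Im(AB)) ≤ vol(Im B). -/
/-- The max-plus matrix–vector product over `ℤ_max = (ℤ ∪ {−∞}, max, +)`:
`(Ax)_i = max_j (A_{ij} + x_j)`. -/
def maxMulVec {m k : ℕ} (A : Matrix (Fin m) (Fin k) (WithBot ℤ))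
    (x : Fin k → WithBot ℤ) : Fin m → WithBot ℤ :=
  fun i => Finset.univ.sup fun j => A i j + x j

/-- The max-plus matrix product: `(AB)_{ij} = max_t (A_{it} + B_{tj})`. -/
def maxMatMul {m k l : ℕ} (A : Matrix (Fin m) (Fin k) (WithBot ℤ))
    (B : Matrix (Fin k) (Fin l) (WithBot ℤ)) : Matrix (Fin m) (Fin l) (WithBot ℤ) :=
  Matrix.of fun i j => Finset.univ.sup fun t => A i t + B t j

/-- `Im A`: the subsemimodule generated by the columns of `A`, i.e. the set of all
max-plus linear combinations `Ay` of the columns of `A`. -/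
def ImM {m k : ℕ} (A : Matrix (Fin m) (Fin k) (WithBot ℤ)) : Set (Fin m → WithBot ℤ) :=
  {v | ∃ y : Fin k → WithBot ℤ, v = maxMulVec A y}

/-- A subsemimodule of `ℤ_max^m`: contains `(−∞,…,−∞)`, is closed under entrywise max,
and under addition of a scalar `λ ∈ ℤ ∪ {−∞}` to all entries. -/
def IsSubsemimodule {m : ℕ} (X : Set (Fin m → WithBot ℤ)) : Prop :=
  (fun _ => ⊥) ∈ X ∧ (∀ x ∈ X, ∀ y ∈ X, x ⊔ y ∈ X) ∧
    ∀ (c : WithBot ℤ), ∀ x ∈ X, (fun i => c + x i) ∈ X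

/-- The volume of a subset of `ℤ_max^m`: the cardinality (in `ℕ ∪ {∞}`) of the set
of its elements `x` with `max_i x_i = 0`. -/
noncomputable def vol {m : ℕ} (X : Set (Fin m → WithBot ℤ)) : ℕ∞ :=
  {x ∈ X | Finset.univ.sup x = (0 : WithBot ℤ)}.encard

/- ### auxiliary lemmas -/

lemma wb_add_sup (a b c : WithBot ℤ) : a + (b ⊔ c) = (a + b) ⊔ (a + c) := by
  rcases le_total b c with h | h
  · rw [sup_eq_right.2 h, sup_eq_right.2 (add_le_add_right h a)]
  · rw [sup_eq_left.2 h, sup_eq_left.2 (add_le_add_right h a)]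

lemma wb_add_finsetSup {ι : Type*} (a : WithBot ℤ) (s : Finset ι) (f : ι → WithBot ℤ) :
    a + s.sup f = s.sup fun i => a + f i := by
  induction s using Finset.cons_induction with
  | empty => simp
  | cons i s hi ih => rw [Finset.sup_cons, Finset.sup_cons, wb_add_sup, ih]

lemma wb_finsetSup_add {ι : Type*} (a : WithBot ℤ) (s : Finset ι) (f : ι → WithBot ℤ) :
    s.sup f + a = s.sup fun i => f i + a := by
  rw [add_comm, wb_add_finsetSup]; simp [add_comm]

lemma maxMulVec_scalar {m k : ℕ} (A : Matrix (Fin m) (Fin k) (WithBot ℤ))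
    (c : WithBot ℤ) (y : Fin k → WithBot ℤ) :
    maxMulVec A (fun j => c + y j) = fun i => c + maxMulVec A y i := by
  funext i
  unfold maxMulVec
  rw [wb_add_finsetSup]
  refine Finset.sup_congr rfl fun j _ => ?_
  rw [← add_assoc, add_comm (A i j) c, add_assoc]

lemma vol_image_aux {r n : ℕ} (A : Matrix (Fin r) (Fin n) (WithBot ℤ))
    (Y : Set (Fin n → WithBot ℤ)) (hY : IsSubsemimodule Y) :
    vol (maxMulVec A '' Y) ≤ vol Y := by
  classical
  obtain ⟨-, -, hscal⟩ := hY
  set F : (Fin n → WithBot ℤ) → (Fin r → WithBot ℤ) := fun y =>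
    fun i => ((-(WithBot.unbotD 0 (Finset.univ.sup (maxMulVec A y))) : ℤ) : WithBot ℤ)
      + maxMulVec A y i with hF
  set S := {y ∈ Y | Finset.univ.sup y = (0 : WithBot ℤ)}
  set T := {v ∈ maxMulVec A '' Y | Finset.univ.sup v = (0 : WithBot ℤ)}
  have hsub : T ⊆ F '' S := by
    rintro v ⟨⟨y₀, hy₀Y, rfl⟩, hsupv⟩
    -- sup y₀ ≠ ⊥
    have hy₀ : Finset.univ.sup y₀ ≠ ⊥ := by
      intro hb
      have hall : ∀ j, y₀ j = ⊥ := fun j =>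
        le_bot_iff.1 (hb ▸ Finset.le_sup (Finset.mem_univ j))
      have : Finset.univ.sup (maxMulVec A y₀) = (⊥ : WithBot ℤ) := by
        have : maxMulVec A y₀ = fun _ => ⊥ := by
          funext i; unfold maxMulVec
          simp [hall]
        rw [this]; simp
      rw [this] at hsupv; exact (by simp : (⊥ : WithBot ℤ) ≠ 0) hsupv
    obtain ⟨c, hc⟩ := WithBot.ne_bot_iff_exists.1 hy₀
    set yh : Fin n → WithBot ℤ := fun j => ((-c : ℤ) : WithBot ℤ) + y₀ j with hyh
    have hyhY : yh ∈ Y := hscal _ _ hy₀Y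
    have hsupyh : Finset.univ.sup yh = (0 : WithBot ℤ) := by
      rw [hyh, ← wb_add_finsetSup, ← hc, ← WithBot.coe_add]
      norm_num
    have hAyh : maxMulVec A yh = fun i => ((-c : ℤ) : WithBot ℤ) + maxMulVec A y₀ i :=
      maxMulVec_scalar A _ y₀
    have hsupAyh : Finset.univ.sup (maxMulVec A yh) = ((-c : ℤ) : WithBot ℤ) := by
      rw [hAyh, ← wb_add_finsetSup, hsupv, add_zero]
    refine ⟨yh, ⟨hyhY, hsupyh⟩, ?_⟩
    funext i
    simp only [hF]
    simp only [hsupAyh]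
    simp only [hAyh]
    rw [WithBot.unbotD_coe, neg_neg, ← add_assoc, ← WithBot.coe_add]
    norm_num
  calc vol (maxMulVec A '' Y) = T.encard := rfl
    _ ≤ (F '' S).encard := Set.encard_le_encard hsub
    _ ≤ S.encard := Set.encard_image_le F S
    _ = vol Y := rfl

lemma ImM_subsemimodule {n p : ℕ} (B : Matrix (Fin n) (Fin p) (WithBot ℤ)) :
    IsSubsemimodule (ImM B) := by
  refine ⟨⟨fun _ => ⊥, ?_⟩, ?_, ?_⟩
  · funext i; unfold maxMulVec; simp
  · rintro x ⟨y, rfl⟩ x' ⟨y', rfl⟩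
    refine ⟨y ⊔ y', ?_⟩
    funext i
    unfold maxMulVec
    have : (fun j => B i j + (y ⊔ y') j) =
        (fun j => B i j + y j) ⊔ (fun j => B i j + y' j) := by
      funext j; exact wb_add_sup _ _ _
    rw [this, Finset.sup_sup]; rfl
  · rintro c x ⟨y, rfl⟩
    exact ⟨fun j => c + y j, (maxMulVec_scalar B c y).symm⟩

lemma maxMulVec_assoc {r n p : ℕ} (A : Matrix (Fin r) (Fin n) (WithBot ℤ))
    (B : Matrix (Fin n) (Fin p) (WithBot ℤ)) (y : Fin p → WithBot ℤ) :
    maxMulVec (maxMatMul A B) y = maxMulVec A (maxMulVec B y) := by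
  funext i
  unfold maxMulVec maxMatMul
  simp only [Matrix.of_apply]
  calc (Finset.univ.sup fun j => (Finset.univ.sup fun t => A i t + B t j) + y j)
      = Finset.univ.sup fun j => Finset.univ.sup fun t => A i t + B t j + y j :=
        Finset.sup_congr rfl fun j _ => wb_finsetSup_add _ _ _
    _ = Finset.univ.sup fun t => Finset.univ.sup fun j => A i t + B t j + y j :=
        Finset.sup_comm _ _ _
    _ = Finset.univ.sup fun t => A i t + Finset.univ.sup fun j => B t j + y j := by
        refine Finset.sup_congr rfl fun t _ => ?_
        rw [wb_add_finsetSup]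
        exact Finset.sup_congr rfl fun j _ => add_assoc _ _ _

/-- For `A ∈ ℤ_max^{r×n}` and a subsemimodule `Y ⊆ ℤ_max^n`,
`vol(A·Y) ≤ vol(Y)`; in particular `vol(Im(AB)) ≤ vol(Im B)` for every `B`. -/
theorem vol_image_le_vol_Y {r n p : ℕ} (A : Matrix (Fin r) (Fin n) (WithBot ℤ))
    (Y : Set (Fin n → WithBot ℤ)) (hY : IsSubsemimodule Y) :
    vol (maxMulVec A '' Y) ≤ vol Y ∧
    ∀ B : Matrix (Fin n) (Fin p) (WithBot ℤ), vol (ImM (maxMatMul A B)) ≤ vol (ImM B) := by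
  refine ⟨vol_image_aux A Y hY, fun B => ?_⟩
  have him : ImM (maxMatMul A B) = maxMulVec A '' ImM B := by
    ext v
    constructor
    · rintro ⟨y, rfl⟩
      exact ⟨maxMulVec B y, ⟨y, rfl⟩, (maxMulVec_assoc A B y).symm⟩
    · rintro ⟨w, ⟨y, rfl⟩, rfl⟩
      exact ⟨y, (maxMulVec_assoc A B y).symm⟩
  rw [him]
  exact vol_image_aux A (ImM B) (ImM_subsemimodule B)
end

section
/- For every matrix A ∈ ℤ_max^{r×n}, the volume of A equals the volume of its transpose: vol(Im A) = vol(Im Aᵀ). -/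
namespace VolAux


/-- add `c` to a `WithBot ℤ`, sending `⊥` to `⊥`. -/
def shiftc (c : ℤ) (b : WithBot ℤ) : WithBot ℤ := b.map (· + c)

@[simp] lemma shiftc_bot (c : ℤ) : shiftc c ⊥ = ⊥ := rfl
@[simp] lemma shiftc_coe (c v : ℤ) : shiftc c (v : WithBot ℤ) = ((v + c : ℤ) : WithBot ℤ) := rfl

lemma shiftc_max (c : ℤ) (a b : WithBot ℤ) : shiftc c (a ⊔ b) = shiftc c a ⊔ shiftc c b := by
  rcases a with _ | a <;> rcases b with _ | b
  · rfl
  · show shiftc c (⊥ ⊔ (b : WithBot ℤ)) = shiftc c ⊥ ⊔ shiftc c (b : WithBot ℤ)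
    rw [bot_sup_eq, shiftc_bot, bot_sup_eq]
  · show shiftc c ((a : WithBot ℤ) ⊔ ⊥) = shiftc c (a : WithBot ℤ) ⊔ shiftc c ⊥
    rw [sup_bot_eq, shiftc_bot, sup_bot_eq]
  · show shiftc c (max (a : WithBot ℤ) b) = max (shiftc c a) (shiftc c b)
    rcases le_total a b with h | h
    · rw [max_eq_right (by exact_mod_cast h), shiftc_coe, shiftc_coe,
        max_eq_right (by exact_mod_cast (by omega : a + c ≤ b + c))]
    · rw [max_eq_left (by exact_mod_cast h), shiftc_coe, shiftc_coe,
        max_eq_left (by exact_mod_cast (by omega : b + c ≤ a + c))]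

lemma sup_shiftc {m : ℕ} (f : Fin m → WithBot ℤ) (c : ℤ) :
    Finset.univ.sup (fun i => shiftc c (f i)) = shiftc c (Finset.univ.sup f) :=
  (Finset.comp_sup_eq_sup_comp (shiftc c) (shiftc_max c) (shiftc_bot c)).symm

lemma add_shiftc (a w : WithBot ℤ) (c : ℤ) : a + shiftc c w = shiftc c (a + w) := by
  rcases a with _ | a <;> rcases w with _ | w
  · rfl
  · rfl
  · rfl
  · show (a : WithBot ℤ) + ((w + c : ℤ) : WithBot ℤ) = shiftc c ((a : WithBot ℤ) + w)
    rw [← WithBot.coe_add, ← WithBot.coe_add, shiftc_coe]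
    norm_cast
    omega

lemma add_max' (a b c : WithBot ℤ) : a + (b ⊔ c) = (a + b) ⊔ (a + c) := by
  rcases a with _ | a
  · show (⊥ : WithBot ℤ) + (b ⊔ c) = ((⊥ : WithBot ℤ) + b) ⊔ ((⊥ : WithBot ℤ) + c)
    rw [WithBot.bot_add, WithBot.bot_add, WithBot.bot_add, sup_idem]
  · rcases b with _ | b <;> rcases c with _ | c
    · rfl
    · show (a : WithBot ℤ) + (⊥ ⊔ (c : WithBot ℤ)) = ((a : WithBot ℤ) + ⊥) ⊔ ((a : WithBot ℤ) + c)
      rw [bot_sup_eq, WithBot.add_bot, bot_sup_eq]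
    · show (a : WithBot ℤ) + ((b : WithBot ℤ) ⊔ ⊥) = ((a : WithBot ℤ) + b) ⊔ ((a : WithBot ℤ) + ⊥)
      rw [sup_bot_eq, WithBot.add_bot, sup_bot_eq]
    · show (a : WithBot ℤ) + max (b : WithBot ℤ) c = max ((a:WithBot ℤ) + b) ((a:WithBot ℤ) + c)
      rcases le_total b c with h | h
      · rw [max_eq_right (by exact_mod_cast h), max_eq_right
          (by rw [← WithBot.coe_add, ← WithBot.coe_add]; exact_mod_cast (by omega : a + b ≤ a + c))]
      · rw [max_eq_left (by exact_mod_cast h), max_eq_left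
          (by rw [← WithBot.coe_add, ← WithBot.coe_add]; exact_mod_cast (by omega : a + c ≤ a + b))]

lemma sup_coe_exists {m : ℕ} {f : Fin m → WithBot ℤ} {v : ℤ}
    (h : Finset.univ.sup f = (v : WithBot ℤ)) : ∃ i, f i = (v : WithBot ℤ) := by
  rcases Nat.eq_zero_or_pos m with hm | hm
  · subst hm; simp at h
  · have hne : (Finset.univ : Finset (Fin m)).Nonempty := ⟨⟨0, hm⟩, Finset.mem_univ _⟩
    obtain ⟨i, _, hi⟩ := Finset.exists_mem_eq_sup Finset.univ hne f
    exact ⟨i, by rw [← hi, h]⟩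

/-- residuation-like subtraction: `resid a b = a - b` with `a - ⊥ = ⊥`, `⊥ - b = ⊥`. -/
def resid (a b : WithBot ℤ) : WithBot ℤ :=
  match b with
  | ⊥ => ⊥
  | (b₀ : ℤ) => a.map (· - b₀)

@[simp] lemma resid_bot (a : WithBot ℤ) : resid a ⊥ = ⊥ := rfl
@[simp] lemma resid_coe_bot (b : ℤ) : resid ⊥ (b : WithBot ℤ) = ⊥ := rfl
@[simp] lemma resid_coe_coe (a b : ℤ) : resid (a : WithBot ℤ) (b : WithBot ℤ) = ((a - b : ℤ) : WithBot ℤ) := rfl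

lemma resid_shiftc (a b : WithBot ℤ) (c : ℤ) : resid a (shiftc c b) = shiftc (-c) (resid a b) := by
  rcases b with _ | b
  · rfl
  · rcases a with _ | a
    · rfl
    · show resid (a:WithBot ℤ) ((b + c : ℤ) : WithBot ℤ) = shiftc (-c) (resid (a:WithBot ℤ) (b:WithBot ℤ))
      rw [resid_coe_coe, resid_coe_coe, shiftc_coe]
      norm_cast
      ring


lemma add_coe (a : WithBot ℤ) (c : ℤ) : a + (c : WithBot ℤ) = shiftc c a := by
  have := add_shiftc a (0 : WithBot ℤ) c
  simpa [shiftc] using this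

/-- The normalized part of `Im A`. -/
def NS {m k : ℕ} (A : Matrix (Fin m) (Fin k) (WithBot ℤ)) : Set (Fin m → WithBot ℤ) :=
  {x ∈ ImM A | Finset.univ.sup x = (0 : WithBot ℤ)}

lemma vol_eq_NS {m k : ℕ} (A : Matrix (Fin m) (Fin k) (WithBot ℤ)) :
    vol (ImM A) = (NS A).encard := rfl

def dvec {m k : ℕ} (A : Matrix (Fin m) (Fin k) (WithBot ℤ)) (x : Fin m → WithBot ℤ) :
    Fin k → WithBot ℤ :=
  fun j => Finset.univ.sup fun i => A i j + (x i).map (fun v => -v)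

noncomputable def Mz {m k : ℕ} (A : Matrix (Fin m) (Fin k) (WithBot ℤ))
    (x : Fin m → WithBot ℤ) : ℤ := WithBot.unbotD 0 (Finset.univ.sup (dvec A x))

noncomputable def theta {m k : ℕ} (A : Matrix (Fin m) (Fin k) (WithBot ℤ))
    (x : Fin m → WithBot ℤ) : Fin k → WithBot ℤ :=
  fun j => shiftc (-(Mz A x)) (dvec A x j)

section Core
variable {m k : ℕ} {A : Matrix (Fin m) (Fin k) (WithBot ℤ)} {x : Fin m → WithBot ℤ}

lemma exists_zero_coord (hx : x ∈ NS A) : ∃ i, x i = (0 : WithBot ℤ) := by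
  have := hx.2
  exact_mod_cast sup_coe_exists (v := 0) (by exact_mod_cast this)

lemma sup_dvec_eq (hx : x ∈ NS A) :
    Finset.univ.sup (dvec A x) = ((Mz A x : ℤ) : WithBot ℤ) := by
  obtain ⟨i₀, hi₀⟩ := exists_zero_coord hx
  obtain ⟨y, hy⟩ := hx.1
  have hxi : Finset.univ.sup (fun j => A i₀ j + y j) = ((0 : ℤ) : WithBot ℤ) := by
    have : maxMulVec A y i₀ = ((0:ℤ) : WithBot ℤ) := by rw [← hy]; exact_mod_cast hi₀
    exact this
  obtain ⟨j₀, hj₀⟩ := sup_coe_exists hxi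
  have hA : A i₀ j₀ ≠ ⊥ := by
    intro h; rw [h] at hj₀; simp [WithBot.bot_add] at hj₀
  obtain ⟨a₀, ha₀⟩ := WithBot.ne_bot_iff_exists.mp hA
  have hlb : ((a₀ : ℤ) : WithBot ℤ) ≤ Finset.univ.sup (dvec A x) := by
    refine le_trans ?_ (Finset.le_sup (f := dvec A x) (Finset.mem_univ j₀))
    refine le_trans ?_ (Finset.le_sup (f := fun i => A i j₀ + (x i).map (fun v => -v))
      (Finset.mem_univ i₀))
    show (a₀ : WithBot ℤ) ≤ A i₀ j₀ + (x i₀).map (fun v => -v)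
    rw [hi₀, ← ha₀]
    show (a₀ : WithBot ℤ) ≤ (a₀ : WithBot ℤ) + ((0:ℤ) : WithBot ℤ).map (fun v => -v)
    rw [WithBot.map_coe, ← WithBot.coe_add]
    exact_mod_cast (by omega : a₀ ≤ a₀ + -0)
  rcases hsup : Finset.univ.sup (dvec A x) with _ | v
  · rw [hsup] at hlb
    exact absurd (le_bot_iff.mp hlb) (by simp)
  · rw [Mz, hsup]; rfl

lemma theta_mem (hx : x ∈ NS A) : theta A x ∈ NS A.transpose := by
  constructor
  · refine ⟨fun i => shiftc (-(Mz A x)) ((x i).map (fun v => -v)), ?_⟩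
    funext j
    show theta A x j = Finset.univ.sup fun i => A.transpose j i + _
    simp only [Matrix.transpose_apply, add_shiftc]
    rw [sup_shiftc]
    rfl
  · show Finset.univ.sup (theta A x) = (0 : WithBot ℤ)
    show Finset.univ.sup (fun j => shiftc (-(Mz A x)) (dvec A x j)) = (0 : WithBot ℤ)
    rw [sup_shiftc, sup_dvec_eq hx, shiftc_coe]
    norm_num

lemma recovery (hx : x ∈ NS A) {i : Fin m} {xi : ℤ} (hxi : x i = (xi : WithBot ℤ)) :
    Finset.univ.sup (fun j => resid (A i j) (dvec A x j)) = (xi : WithBot ℤ) := by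
  obtain ⟨y, hy⟩ := hx.1
  have hxsup : ∀ i' : Fin m, Finset.univ.sup (fun j => A i' j + y j) = x i' := by
    intro i'; rw [hy]; rfl
  -- upper bound
  have hub : ∀ j : Fin k, resid (A i j) (dvec A x j) ≤ (xi : WithBot ℤ) := by
    intro j
    cases hdj : dvec A x j using WithBot.recBotCoe with
    | bot => simp
    | coe zj =>
      cases hAij : A i j using WithBot.recBotCoe with
      | bot => simp
      | coe a =>
        rw [resid_coe_coe]
        have h1 : ((a - xi : ℤ) : WithBot ℤ) ≤ (zj : WithBot ℤ) := by
          rw [← hdj]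
          refine le_trans ?_ (Finset.le_sup (f := fun i' => A i' j + (x i').map (fun v => -v))
            (Finset.mem_univ i))
          show _ ≤ A i j + (x i).map (fun v => -v)
          rw [hAij, hxi, WithBot.map_coe, ← WithBot.coe_add]
          exact_mod_cast le_of_eq (by omega)
        have h2 : a - xi ≤ zj := by exact_mod_cast h1
        exact_mod_cast (by omega : a - zj ≤ xi)
  -- attained
  obtain ⟨js, hjs⟩ := sup_coe_exists (v := xi) (by rw [hxsup i, hxi])
  cases hAs : A i js using WithBot.recBotCoe with
  | bot => rw [hAs, WithBot.bot_add] at hjs; exact absurd hjs (by simp)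
  | coe a =>
  cases hys : y js using WithBot.recBotCoe with
  | bot => rw [hys, WithBot.add_bot] at hjs; exact absurd hjs (by simp)
  | coe b =>
  rw [hAs, hys, ← WithBot.coe_add] at hjs
  have hab : a + b = xi := by exact_mod_cast hjs
  have hzs : dvec A x js = ((-b : ℤ) : WithBot ℤ) := by
    apply le_antisymm
    · apply Finset.sup_le
      intro i' _
      show A i' js + (x i').map (fun v => -v) ≤ _
      cases hxi' : x i' using WithBot.recBotCoe with
      | bot => rw [WithBot.map_bot, WithBot.add_bot]; exact bot_le
      | coe ci' =>
        cases hAi' : A i' js using WithBot.recBotCoe with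
        | bot => rw [WithBot.bot_add]; exact bot_le
        | coe a' =>
          have hle : A i' js + y js ≤ x i' := by
            rw [← hxsup i']
            exact Finset.le_sup (f := fun j => A i' j + y j) (Finset.mem_univ js)
          rw [hAi', hys, ← WithBot.coe_add, hxi'] at hle
          have h3 : a' + b ≤ ci' := by exact_mod_cast hle
          rw [WithBot.map_coe, ← WithBot.coe_add]
          exact_mod_cast (by omega : a' + -ci' ≤ -b)
    · refine le_trans ?_ (Finset.le_sup (f := fun i' => A i' js + (x i').map (fun v => -v))
        (Finset.mem_univ i))
      show _ ≤ A i js + (x i).map (fun v => -v)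
      rw [hAs, hxi, WithBot.map_coe, ← WithBot.coe_add]
      exact_mod_cast le_of_eq (by omega)
  apply le_antisymm (Finset.sup_le fun j _ => hub j)
  refine le_trans ?_ (Finset.le_sup (f := fun j => resid (A i j) (dvec A x j))
    (Finset.mem_univ js))
  show _ ≤ resid (A i js) (dvec A x js)
  rw [hAs, hzs, resid_coe_coe]
  exact_mod_cast le_of_eq (by omega)

lemma recovery_theta (hx : x ∈ NS A) {i : Fin m} {xi : ℤ} (hxi : x i = (xi : WithBot ℤ)) :
    Finset.univ.sup (fun j => resid (A i j) (theta A x j)) = ((xi + Mz A x : ℤ) : WithBot ℤ) := by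
  have : (fun j => resid (A i j) (theta A x j))
      = fun j => shiftc (Mz A x) (resid (A i j) (dvec A x j)) := by
    funext j
    show resid (A i j) (shiftc (-(Mz A x)) (dvec A x j)) = _
    rw [resid_shiftc, neg_neg]
  rw [this, sup_shiftc, recovery hx hxi, shiftc_coe]

lemma theta_injOn {x' : Fin m → WithBot ℤ} (hx : x ∈ NS A) (hx' : x' ∈ NS A)
    (hsupp : ∀ i, x i = ⊥ ↔ x' i = ⊥) (hθ : theta A x = theta A x') : x = x' := by
  have key : ∀ i (ci ci' : ℤ), x i = (ci : WithBot ℤ) → x' i = (ci' : WithBot ℤ) →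
      ci + Mz A x = ci' + Mz A x' := by
    intro i ci ci' hci hci'
    have h1 := recovery_theta hx hci
    have h2 := recovery_theta hx' hci'
    rw [hθ] at h1
    rw [h1] at h2
    exact_mod_cast h2
  have hMM : Mz A x = Mz A x' := by
    obtain ⟨i₀, hi₀⟩ := exists_zero_coord hx
    obtain ⟨i₁, hi₁⟩ := exists_zero_coord hx'
    have hx'i₀ : x' i₀ ≠ ⊥ := fun h => by
      rw [(hsupp i₀).mpr h] at hi₀; exact absurd hi₀ (by simp)
    have hxi₁ : x i₁ ≠ ⊥ := fun h => by
      rw [(hsupp i₁).mp h] at hi₁; exact absurd hi₁ (by simp)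
    obtain ⟨c₀, hc₀⟩ := WithBot.ne_bot_iff_exists.mp hx'i₀
    obtain ⟨c₁, hc₁⟩ := WithBot.ne_bot_iff_exists.mp hxi₁
    have e₀ := key i₀ 0 c₀ (by exact_mod_cast hi₀) hc₀.symm
    have e₁ := key i₁ c₁ 0 hc₁.symm (by exact_mod_cast hi₁)
    have hc₀le : c₀ ≤ 0 := by
      have : x' i₀ ≤ (0 : WithBot ℤ) := by
        rw [← hx'.2]; exact Finset.le_sup (Finset.mem_univ i₀)
      rw [← hc₀] at this; exact_mod_cast this
    have hc₁le : c₁ ≤ 0 := by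
      have : x i₁ ≤ (0 : WithBot ℤ) := by
        rw [← hx.2]; exact Finset.le_sup (Finset.mem_univ i₁)
      rw [← hc₁] at this; exact_mod_cast this
    omega
  funext i
  cases hci : x i using WithBot.recBotCoe with
  | bot => rw [((hsupp i).mp hci).symm]
  | coe ci =>
    have hne : x' i ≠ ⊥ := fun h => by
      rw [(hsupp i).mpr h] at hci; exact absurd hci (by simp)
    obtain ⟨ci', hci'⟩ := WithBot.ne_bot_iff_exists.mp hne
    have := key i ci ci' hci hci'.symm
    rw [← hci']
    exact_mod_cast (by omega : ci = ci')

lemma NS_infinite (hx : x ∈ NS A) {i₀ : Fin m} {j₀ : Fin k} {a₀ : ℤ}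
    (hbot : x i₀ = ⊥) (hA : A i₀ j₀ = (a₀ : WithBot ℤ)) : (NS A).Infinite := by
  obtain ⟨y, hy⟩ := hx.1
  have hKlb : ((a₀ : ℤ) : WithBot ℤ) ≤ Finset.univ.sup (fun i => A i j₀) := by
    rw [← hA]; exact Finset.le_sup (f := fun i => A i j₀) (Finset.mem_univ i₀)
  cases hK : Finset.univ.sup (fun i => A i j₀) using WithBot.recBotCoe with
  | bot => rw [hK] at hKlb; exact absurd (le_bot_iff.mp hKlb) (by simp)
  | coe KZ =>
  set f : ℕ → (Fin m → WithBot ℤ) :=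
    fun p => fun i => x i ⊔ shiftc (-KZ - p) (A i j₀) with hf
  have hmem : ∀ p : ℕ, f p ∈ NS A := by
    intro p
    set c : ℤ := -KZ - p with hc
    constructor
    · refine ⟨fun j => if j = j₀ then (y j ⊔ ((c : ℤ) : WithBot ℤ)) else y j, ?_⟩
      funext i
      have hxi : x i = Finset.univ.sup fun j => A i j + y j := by rw [hy]; rfl
      show x i ⊔ shiftc c (A i j₀) = Finset.univ.sup fun j => A i j + _
      apply le_antisymm
      · refine _root_.sup_le ?_ ?_
        · rw [hxi]
          apply Finset.sup_le
          intro j _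
          refine le_trans ?_ (Finset.le_sup (Finset.mem_univ j))
          show A i j + y j ≤ A i j + ite (j = j₀) (y j ⊔ ((c:ℤ) : WithBot ℤ)) (y j)
          by_cases hj : j = j₀
          · rw [if_pos hj]; exact add_le_add_right le_sup_left _
          · rw [if_neg hj]
        · refine le_trans ?_ (Finset.le_sup (Finset.mem_univ j₀))
          show shiftc c (A i j₀) ≤ A i j₀ + ite (j₀ = j₀) (y j₀ ⊔ ((c:ℤ) : WithBot ℤ)) (y j₀)
          rw [if_pos rfl, ← add_coe]
          exact add_le_add_right le_sup_right _
      · apply Finset.sup_le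
        intro j _
        show A i j + ite (j = j₀) (y j ⊔ ((c:ℤ) : WithBot ℤ)) (y j) ≤ _
        by_cases hj : j = j₀
        · subst hj
          rw [if_pos rfl, add_max', add_coe]
          refine sup_le_sup ?_ le_rfl
          rw [hxi]
          exact Finset.le_sup (f := fun j' => A i j' + y j') (Finset.mem_univ j)
        · rw [if_neg hj]
          refine le_trans ?_ le_sup_left
          rw [hxi]
          exact Finset.le_sup (f := fun j' => A i j' + y j') (Finset.mem_univ j)
    · show Finset.univ.sup (f p) = (0 : WithBot ℤ)
      have : f p = (x ⊔ fun i => shiftc c (A i j₀)) := rfl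
      rw [this, Finset.sup_sup, hx.2, sup_shiftc, hK, shiftc_coe]
      have : KZ + c ≤ 0 := by omega
      rw [sup_eq_left.mpr (by exact_mod_cast this)]
  have hinj : Function.Injective f := by
    intro p q hpq
    have := congrFun hpq i₀
    rw [hf] at this
    simp only at this
    rw [hbot, hA, bot_sup_eq, bot_sup_eq, shiftc_coe, shiftc_coe] at this
    have : a₀ + (-KZ - (p:ℤ)) = a₀ + (-KZ - (q:ℤ)) := by exact_mod_cast this
    omega
  exact Set.infinite_of_injective_forall_mem hinj hmem

lemma bot_row (hx : x ∈ ImM A) {i : Fin m} (h : ∀ j, A i j = ⊥) : x i = ⊥ := by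
  obtain ⟨y, rfl⟩ := hx
  refine le_bot_iff.mp (Finset.sup_le fun j _ => ?_)
  rw [h j, WithBot.bot_add]

lemma transfer (h : (NS A).Infinite) : (NS A.transpose).Infinite := by
  classical
  have hinf : Infinite ↥(NS A) := Set.infinite_coe_iff.mpr h
  obtain ⟨s, hs⟩ := Finite.exists_infinite_fiber
    (fun p : ↥(NS A) => (fun i => decide (p.1 i = ⊥) : Fin m → Bool))
  set T : Set (Fin m → WithBot ℤ) := Subtype.val '' ((fun p : ↥(NS A) =>
    (fun i => decide (p.1 i = ⊥) : Fin m → Bool)) ⁻¹' {s}) with hT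
  have hTinf : T.Infinite := by
    have h2 : ((fun p : ↥(NS A) =>
        (fun i => decide (p.1 i = ⊥) : Fin m → Bool)) ⁻¹' {s}).Infinite :=
      Set.infinite_coe_iff.mp hs
    exact Set.Infinite.image (Set.injOn_of_injective Subtype.val_injective) h2
  have hTsub : T ⊆ NS A := by rintro _ ⟨p, _, rfl⟩; exact p.2
  have hTsupp : ∀ x', ∀ h' : x' ∈ T, ∀ i, (x' i = ⊥ ↔ s i = true) := by
    rintro _ ⟨p, hp, rfl⟩ i
    have hps : (fun i => decide (p.1 i = ⊥)) = s := hp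
    have := congrFun hps i
    constructor
    · intro hb; rw [← this]; simpa using hb
    · intro hb; rw [← this] at hb; simpa using hb
  have hInjOn : Set.InjOn (theta A) T := fun x1 h1 x2 h2 he =>
    theta_injOn (hTsub h1) (hTsub h2)
      (fun i => (hTsupp x1 h1 i).trans (hTsupp x2 h2 i).symm) he
  have himg := Set.Infinite.image hInjOn hTinf
  refine Set.Infinite.mono ?_ himg
  rintro _ ⟨x1, h1, rfl⟩
  exact theta_mem (hTsub h1)

end Core

lemma NS_encard_le {m k : ℕ} (A : Matrix (Fin m) (Fin k) (WithBot ℤ)) :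
    (NS A).encard ≤ (NS A.transpose).encard := by
  by_cases hT : (NS A.transpose).Infinite
  · rw [hT.encard_eq]; exact le_top
  · have hA : ¬ (NS A).Infinite := fun h => hT (transfer h)
    have hsupp : ∀ x ∈ NS A, ∀ x' ∈ NS A, ∀ i, x i = ⊥ → x' i = ⊥ := by
      intro x hx x' hx' i hxi
      by_contra hne
      have hex : ∃ j a, A i j = ((a : ℤ) : WithBot ℤ) := by
        by_contra hno
        push_neg at hno
        have hall : ∀ j, A i j = ⊥ := fun j => by
          cases hAij : A i j using WithBot.recBotCoe with
          | bot => rfl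
          | coe a => exact absurd hAij (hno j a)
        exact hne (bot_row hx'.1 hall)
      obtain ⟨j, a, hAij⟩ := hex
      exact hA (NS_infinite hx hxi hAij)
    have hinj : Set.InjOn (theta A) (NS A) := fun x1 h1 x2 h2 he =>
      theta_injOn h1 h2 (fun i => ⟨hsupp _ h1 _ h2 i, hsupp _ h2 _ h1 i⟩) he
    calc (NS A).encard = (theta A '' NS A).encard := (hinj.encard_image).symm
      _ ≤ (NS A.transpose).encard := Set.encard_le_encard
          (by rintro _ ⟨x1, h1, rfl⟩; exact theta_mem h1)

end VolAux



open Matrix in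
/-- The volume of a matrix over `ℤ_max` equals the volume of its transpose:
`vol(Im A) = vol(Im Aᵀ)`. -/
theorem vol_imA_eq_vol_imAT {r n : ℕ} (A : Matrix (Fin r) (Fin n) (WithBot ℤ)) :
    vol (ImM A) = vol (ImM Aᵀ) := by
  rw [VolAux.vol_eq_NS, VolAux.vol_eq_NS]
  refine le_antisymm (VolAux.NS_encard_le A) ?_
  have := VolAux.NS_encard_le Aᵀ
  rwa [Matrix.transpose_transpose] at this
end

section
/- Let K ∈ ℤ^{n×s} be a matrix all of whose entries are finite integers, viewed as a matrix over ℤ_max. Then vol(Im K) ≤ (Δ_H(K)+1)^n − Δ_H(K)^n, where the powers are ordinary integer powers. -/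
/-- The additive Hilbert seminorm of `x ∈ ℤⁿ`: `‖x‖_H = max_i x_i − min_i x_i`
(a natural number since the max dominates the min). -/
def hilbertNorm {n : ℕ} [NeZero n] (x : Fin n → ℤ) : ℕ :=
  (Finset.univ.sup' Finset.univ_nonempty x - Finset.univ.inf' Finset.univ_nonempty x).toNat

/-- `Δ_H(K)`: the maximum of the Hilbert seminorms of the columns of `K ∈ ℤ^{n×s}`. -/
def deltaH {n s : ℕ} [NeZero n] [NeZero s] (K : Matrix (Fin n) (Fin s) ℤ) : ℕ :=
  Finset.univ.sup' Finset.univ_nonempty fun j => hilbertNorm fun i => K i j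

/-- A matrix with finite integer entries, viewed as a matrix over `ℤ_max`. -/
def toZmax {n s : ℕ} (K : Matrix (Fin n) (Fin s) ℤ) : Matrix (Fin n) (Fin s) (WithBot ℤ) :=
  Matrix.of fun i j => (K i j : WithBot ℤ)

/-- For a matrix `K ∈ ℤ^{n×s}` with all entries finite, viewed over `ℤ_max`,
`vol(Im K) ≤ (Δ_H(K)+1)^n − Δ_H(K)^n` (ordinary integer powers). -/
theorem vol_imK_le_hilbert_bound {n s : ℕ} [NeZero n] [NeZero s]
    (K : Matrix (Fin n) (Fin s) ℤ) :
    vol (ImM (toZmax K)) ≤ (((deltaH K + 1) ^ n - deltaH K ^ n : ℕ) : ℕ∞) := by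
  classical
  set Δ := deltaH K with hΔ
  set B : Finset (Fin n → ℤ) := Fintype.piFinset (fun _ => Finset.Icc (-(Δ:ℤ)) 0) with hB
  set B' : Finset (Fin n → ℤ) := Fintype.piFinset (fun _ => Finset.Icc (-(Δ:ℤ)) (-1)) with hB'
  have hsub : {x ∈ ImM (toZmax K) | Finset.univ.sup x = (0 : WithBot ℤ)}
      ⊆ (fun f : Fin n → ℤ => fun i => (f i : WithBot ℤ)) '' ↑(B \ B') := by
    rintro x ⟨⟨y, hy⟩, hsup⟩
    obtain ⟨i₀, -, hi₀⟩ := Finset.exists_mem_eq_sup' (Finset.univ_nonempty (α := Fin n)) x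
    rw [Finset.sup'_eq_sup] at hi₀
    have hxi₀ : x i₀ = 0 := by rw [← hi₀, hsup]
    have hx0 : x i₀ = Finset.univ.sup fun j => ((K i₀ j : WithBot ℤ)) + y j := by
      rw [hy]; rfl
    obtain ⟨j₀, -, hj₀⟩ := Finset.exists_mem_eq_sup' (Finset.univ_nonempty (α := Fin s))
      (fun j => ((K i₀ j : WithBot ℤ)) + y j)
    rw [Finset.sup'_eq_sup, ← hx0, hxi₀] at hj₀
    -- hj₀ : 0 = (K i₀ j₀ : WithBot ℤ) + y j₀
    obtain ⟨c, hc⟩ : ∃ c : ℤ, y j₀ = (c : WithBot ℤ) := by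
      cases h : y j₀ with
      | bot => rw [h] at hj₀; simp at hj₀
      | coe c => exact ⟨c, rfl⟩
    have hc0 : K i₀ j₀ + c = 0 := by
      rw [hc, ← WithBot.coe_add] at hj₀
      exact_mod_cast hj₀.symm
    -- lower bound for each coordinate
    have hlow : ∀ i, ((K i j₀ - K i₀ j₀ : ℤ) : WithBot ℤ) ≤ x i := by
      intro i
      have : ((K i j₀ : WithBot ℤ)) + y j₀ ≤ x i := by
        rw [hy]
        exact Finset.le_sup (f := fun j => (toZmax K) i j + y j) (Finset.mem_univ j₀)
      rw [hc, ← WithBot.coe_add] at this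
      have hce : K i j₀ + c = K i j₀ - K i₀ j₀ := by omega
      rwa [hce] at this
    have hup : ∀ i, x i ≤ (0 : WithBot ℤ) := by
      intro i
      have := Finset.le_sup (f := x) (Finset.mem_univ i)
      rwa [hsup] at this
    have hbound : ∀ i, -(Δ:ℤ) ≤ K i j₀ - K i₀ j₀ := by
      intro i
      have h1 : Finset.univ.inf' Finset.univ_nonempty (fun i => K i j₀) ≤ K i j₀ :=
        Finset.inf'_le _ (Finset.mem_univ i)
      have h2 : K i₀ j₀ ≤ Finset.univ.sup' Finset.univ_nonempty (fun i => K i j₀) :=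
        Finset.le_sup' (fun i => K i j₀) (Finset.mem_univ i₀)
      have h4 : hilbertNorm (fun i => K i j₀) ≤ Δ :=
        Finset.le_sup' (f := fun j => hilbertNorm fun i => K i j) (Finset.mem_univ j₀)
      have h4' : ((Finset.univ.sup' Finset.univ_nonempty (fun i => K i j₀)
          - Finset.univ.inf' Finset.univ_nonempty (fun i => K i j₀)).toNat : ℤ) ≤ (Δ:ℤ) := by
        exact_mod_cast h4
      omega
    -- each coordinate is finite
    have hne : ∀ i, x i ≠ ⊥ := by
      intro i h
      have := hlow i
      rw [h] at this
      simp at this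
    set f : Fin n → ℤ := fun i => WithBot.unbotD 0 (x i) with hf
    have hxf : ∀ i, x i = (f i : WithBot ℤ) := by
      intro i
      cases h : x i with
      | bot => exact absurd h (hne i)
      | coe c => simp [hf, h]
    have hfi : ∀ i, -(Δ:ℤ) ≤ f i ∧ f i ≤ 0 := by
      intro i
      constructor
      · have := le_trans (WithBot.coe_le_coe.2 (hbound i)) (hlow i)
        rw [hxf i] at this
        exact_mod_cast this
      · have := hup i
        rw [hxf i] at this
        exact_mod_cast this
    have hfi₀ : f i₀ = 0 := by
      have := hxi₀
      rw [hxf i₀] at this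
      exact_mod_cast this
    refine ⟨f, ?_, ?_⟩
    · rw [Finset.mem_coe, Finset.mem_sdiff]
      constructor
      · rw [hB, Fintype.mem_piFinset]
        intro i
        rw [Finset.mem_Icc]
        exact hfi i
      · rw [hB', Fintype.mem_piFinset]
        push_neg
        exact ⟨i₀, by rw [Finset.mem_Icc]; omega⟩
    · funext i
      exact (hxf i).symm
  have hBB' : B' ⊆ B := by
    intro f hfm
    rw [hB', Fintype.mem_piFinset] at hfm
    rw [hB, Fintype.mem_piFinset]
    intro i
    have := hfm i
    rw [Finset.mem_Icc] at *
    omega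
  have hcard : (B \ B').card = (Δ + 1) ^ n - Δ ^ n := by
    rw [Finset.card_sdiff_of_subset hBB', hB, hB', Fintype.card_piFinset, Fintype.card_piFinset]
    simp only [Int.card_Icc, Finset.prod_const, Finset.card_univ, Fintype.card_fin]
    congr 1 <;> congr 1 <;> omega
  calc vol (ImM (toZmax K))
      ≤ ((fun f : Fin n → ℤ => fun i => (f i : WithBot ℤ)) '' ↑(B \ B')).encard :=
        Set.encard_mono hsub
    _ ≤ (↑(B \ B') : Set (Fin n → ℤ)).encard := Set.encard_image_le _ _
    _ = ((B \ B').card : ℕ∞) := Set.encard_coe_eq_coe_finsetCard _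
    _ = _ := by rw [hcard]
end
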